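/- arXiv:2208.07533 — 6 statements merged into one kernel-verified Lean document; each statement's English description precedes it below -/
import Mathlib

section
/- If a risk sharing rule A satisfies Property UI (universal improvement), then A satisfies Axioms AF and RF, and also Property CP (constant preserving): for every X ∈ 𝒳ⁿ and every i, if Xᵢ = x a.s. for some x ∈ ℝ, then Aᵢ^X = x a.s. -/
open MeasureTheory

noncomputable section

/-- Convex order: X ≤_cx Y iff E[u(X)] ≤ E[u(Y)] for every convex function u : ℝ → ℝ
such that both u(X) and u(Y) are integrable. -/
def CxLE {Ω : Type*} [MeasurableSpace Ω] (μ : MeasureTheory.Measure Ω)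
    (X Y : Ω → ℝ) : Prop :=
  ∀ u : ℝ → ℝ, ConvexOn ℝ Set.univ u →
    MeasureTheory.Integrable (fun ω => u (X ω)) μ →
    MeasureTheory.Integrable (fun ω => u (Y ω)) μ →
    ∫ ω, u (X ω) ∂μ ≤ ∫ ω, u (Y ω) ∂μ

/-- Affine functions are convex. -/
lemma convexOn_affine' (c d : ℝ) : ConvexOn ℝ Set.univ (fun t => c * t + d) := by
  refine ⟨convex_univ, fun a _ b _ p q hp hq hpq => le_of_eq ?_⟩
  simp only [smul_eq_mul]
  linear_combination (-d) * hpq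

/-- `t ↦ |t - x|` is convex. -/
lemma convexOn_abs_sub' (x : ℝ) : ConvexOn ℝ Set.univ (fun t => |t - x|) := by
  refine ⟨convex_univ, fun a _ b _ p q hp hq hpq => ?_⟩
  simp only [smul_eq_mul]
  have h : p * a + q * b - x = p * (a - x) + q * (b - x) := by linear_combination x * hpq
  rw [h]
  calc |p * (a - x) + q * (b - x)| ≤ |p * (a - x)| + |q * (b - x)| := abs_add_le _ _
    _ = p * |a - x| + q * |b - x| := by
        rw [abs_mul, abs_mul, abs_of_nonneg hp, abs_of_nonneg hq]

/-- `t ↦ max (t - m) 0` is convex. -/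
lemma convexOn_posPart_sub' (m : ℝ) : ConvexOn ℝ Set.univ (fun t => max (t - m) 0) := by
  refine ⟨convex_univ, fun a _ b _ p q hp hq hpq => ?_⟩
  simp only [smul_eq_mul]
  have h : p * a + q * b - m = p * (a - m) + q * (b - m) := by linear_combination m * hpq
  rw [h]
  refine max_le ?_ ?_
  · have h1 : a - m ≤ max (a - m) 0 := le_max_left _ _
    have h2 : b - m ≤ max (b - m) 0 := le_max_left _ _
    nlinarith
  · have h1 : (0:ℝ) ≤ max (a - m) 0 := le_max_right _ _
    have h2 : (0:ℝ) ≤ max (b - m) 0 := le_max_right _ _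
    nlinarith

/-- if a risk sharing rule satisfies Property UI (universal improvement),
then it satisfies Axioms AF and RF, and Property CP (constant preserving). -/
theorem ui_implies_af_rf_cp
    {Ω : Type*} [MeasurableSpace Ω] {μ : Measure Ω} [IsProbabilityMeasure μ]
    {n : ℕ} (hn : 3 ≤ n)
    -- a risk sharing rule: a map 𝒳ⁿ → 𝒳ⁿ whose components sum to the total risk
    (A : (Fin n → Lp ℝ 1 μ) → (Fin n → Lp ℝ 1 μ))
    (hsum : ∀ X, ∑ i, A X i = ∑ i, X i)
    -- Property UI: Aᵢ^X ≤_cx Xᵢ for every X and i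
    (hUI : ∀ X (i : Fin n), CxLE μ (A X i : Ω → ℝ) (X i : Ω → ℝ)) :
    -- Axiom AF
    (∀ X (i : Fin n), ∫ ω, (A X i : Ω → ℝ) ω ∂μ = ∫ ω, (X i : Ω → ℝ) ω ∂μ) ∧
    -- Axiom RF
    (∀ X (i : Fin n), ∀ᵐ ω ∂μ, ((A X i : Ω → ℝ) ω : EReal)
        ≤ essSup (fun ω' => ((X i : Ω → ℝ) ω' : EReal)) μ) ∧
    -- Property CP: if Xᵢ = x a.s. for a constant x, then Aᵢ^X = x a.s.
    (∀ X (i : Fin n) (x : ℝ), (X i : Ω → ℝ) =ᵐ[μ] (fun _ => x) →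
        (A X i : Ω → ℝ) =ᵐ[μ] fun _ => x) := by
  refine ⟨?_, ?_, ?_⟩
  · -- AF
    intro X i
    have hA : Integrable (A X i : Ω → ℝ) μ := L1.integrable_coeFn (A X i)
    have hX : Integrable (X i : Ω → ℝ) μ := L1.integrable_coeFn (X i)
    have h1 := hUI X i (fun t => 1 * t + 0) (convexOn_affine' 1 0)
      (by simpa using hA) (by simpa using hX)
    have h2 := hUI X i (fun t => (-1) * t + 0) (convexOn_affine' (-1) 0)
      (by simp only [neg_one_mul, add_zero]; exact hA.neg) (by simp only [neg_one_mul, add_zero]; exact hX.neg)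
    simp only [one_mul, add_zero, neg_one_mul] at h1 h2
    rw [integral_neg, integral_neg] at h2
    linarith
  · -- RF
    intro X i
    have hA : Integrable (A X i : Ω → ℝ) μ := L1.integrable_coeFn (A X i)
    have hX : Integrable (X i : Ω → ℝ) μ := L1.integrable_coeFn (X i)
    set M := essSup (fun ω' => (((X i : Ω → ℝ) ω' : ℝ) : EReal)) μ with hM
    have hle : ∀ᵐ ω ∂μ, (((X i : Ω → ℝ) ω : ℝ) : EReal) ≤ M := ae_le_essSup
    rcases eq_or_ne M ⊤ with hMtop | hMtop
    · filter_upwards with ω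
      rw [hMtop]; exact le_top
    · -- M is a real number
      have hMbot : M ≠ ⊥ := by
        obtain ⟨ω, hω⟩ := hle.exists
        exact fun h => absurd (h ▸ hω) (EReal.coe_ne_bot _ ∘ le_bot_iff.mp)
      set m := M.toReal with hm
      have hMm : (m : EReal) = M := EReal.coe_toReal hMtop hMbot
      have hXm : ∀ᵐ ω ∂μ, (X i : Ω → ℝ) ω ≤ m := by
        filter_upwards [hle] with ω hω
        rw [← hMm] at hω
        exact EReal.coe_le_coe_iff.mp hω
      -- apply UI with u(t) = max (t - m) 0
      have hiA : Integrable (fun ω => max ((A X i : Ω → ℝ) ω - m) 0) μ :=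
        (hA.sub (integrable_const m)).pos_part
      have hiX : Integrable (fun ω => max ((X i : Ω → ℝ) ω - m) 0) μ :=
        (hX.sub (integrable_const m)).pos_part
      have hXzero : ∫ ω, max ((X i : Ω → ℝ) ω - m) 0 ∂μ = 0 := by
        rw [integral_congr_ae (g := fun _ => (0:ℝ)) ?_, integral_zero]
        filter_upwards [hXm] with ω hω
        simp [max_eq_right, sub_nonpos.mpr hω]
      have hle2 := hUI X i (fun t => max (t - m) 0) (convexOn_posPart_sub' m) hiA hiX
      rw [hXzero] at hle2
      have hnn : 0 ≤ᵐ[μ] fun ω => max ((A X i : Ω → ℝ) ω - m) 0 :=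
        Filter.Eventually.of_forall fun ω => le_max_right _ _
      have hzero : ∫ ω, max ((A X i : Ω → ℝ) ω - m) 0 ∂μ = 0 :=
        le_antisymm hle2 (integral_nonneg fun ω => le_max_right _ _)
      have hae := (integral_eq_zero_iff_of_nonneg_ae hnn hiA).mp hzero
      filter_upwards [hae] with ω hω
      have : (A X i : Ω → ℝ) ω ≤ m := by
        by_contra hc
        push_neg at hc
        have : max ((A X i : Ω → ℝ) ω - m) 0 > 0 := lt_max_of_lt_left (by linarith)
        simp only [Pi.zero_apply] at hω
        rw [hω] at this
        exact lt_irrefl _ this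
      rw [← hMm]
      exact EReal.coe_le_coe_iff.mpr this
  · -- CP
    intro X i x hx
    have hA : Integrable (A X i : Ω → ℝ) μ := L1.integrable_coeFn (A X i)
    have hX : Integrable (X i : Ω → ℝ) μ := L1.integrable_coeFn (X i)
    have hiA : Integrable (fun ω => |(A X i : Ω → ℝ) ω - x|) μ :=
      (hA.sub (integrable_const x)).abs
    have hiX : Integrable (fun ω => |(X i : Ω → ℝ) ω - x|) μ :=
      (hX.sub (integrable_const x)).abs
    have hXzero : ∫ ω, |(X i : Ω → ℝ) ω - x| ∂μ = 0 := by
      rw [integral_congr_ae (g := fun _ => (0:ℝ)) ?_, integral_zero]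
      filter_upwards [hx] with ω hω
      simp [hω]
    have hle2 := hUI X i (fun t => |t - x|) (convexOn_abs_sub' x) hiA hiX
    rw [hXzero] at hle2
    have hnn : 0 ≤ᵐ[μ] fun ω => |(A X i : Ω → ℝ) ω - x| :=
      Filter.Eventually.of_forall fun ω => abs_nonneg _
    have hzero : ∫ ω, |(A X i : Ω → ℝ) ω - x| ∂μ = 0 :=
      le_antisymm hle2 (integral_nonneg fun ω => abs_nonneg _)
    have hae := (integral_eq_zero_iff_of_nonneg_ae hnn hiA).mp hzero
    filter_upwards [hae] with ω hω
    simp only [Pi.zero_apply] at hω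
    have := abs_eq_zero.mp hω
    linarith [this]
end
end

section
/- If a risk sharing rule satisfies Axiom OA and Property ZP, then it satisfies Property SM (symmetry): for every X ∈ 𝒳ⁿ and every permutation π of {1,…,n}, the i-th component of A^{X_π} equals A_{π(i)}^X a.s. for every i, where X_π = (X_{π(1)}, …, X_{π(n)}). -/
open MeasureTheory

noncomputable section

/-- if a risk sharing rule satisfies Axiom OA and Property ZP, then it
satisfies Property SM (symmetry): for every permutation π, the i-th component of
A^{X_π} equals A_{π(i)}^X. -/
theorem oa_zp_imply_symmetry
    {Ω : Type*} [MeasurableSpace Ω] {μ : Measure Ω} [IsProbabilityMeasure μ]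
    {n : ℕ} (hn : 3 ≤ n)
    (A : (Fin n → Lp ℝ 1 μ) → (Fin n → Lp ℝ 1 μ))
    (hsum : ∀ X, ∑ i, A X i = ∑ i, X i)
    -- Axiom OA
    (hOA : ∀ X (i j : Fin n), i ≠ j → ∀ k, k ≠ i → k ≠ j →
        A (Function.update (Function.update X i (X i + X j)) j 0) k = A X k)
    -- Property ZP
    (hZP : ∀ X (i : Fin n), X i = 0 → A X i = 0) :
    -- Property SM
    ∀ X (π : Equiv.Perm (Fin n)) (i : Fin n), A (fun k => X (π k)) i = A X (π i) := by
  -- there is always a third coordinate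
  have exists_c : ∀ a b : Fin n, ∃ c : Fin n, c ≠ a ∧ c ≠ b := by
    intro a b
    by_contra h
    push_neg at h
    have hsub : (Finset.univ : Finset (Fin n)) ⊆ {a, b} := by
      intro c _
      simp only [Finset.mem_insert, Finset.mem_singleton]
      by_contra hc
      push_neg at hc
      exact hc.2 (h c hc.1)
    have h2 := Finset.card_le_card hsub
    have h3 : ({a, b} : Finset (Fin n)).card ≤ 2 :=
      (Finset.card_insert_le _ _).trans (by simp)
    simp only [Finset.card_univ, Fintype.card_fin] at h2
    omega
  -- the merged allocation at the receiving coordinate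
  have mergeI : ∀ (X : Fin n → Lp ℝ 1 μ) (i j : Fin n), i ≠ j →
      A (Function.update (Function.update X i (X i + X j)) j 0) i = A X i + A X j := by
    intro X i j hij
    set Y := Function.update (Function.update X i (X i + X j)) j 0 with hY
    have hYj : Y j = 0 := Function.update_self _ _ _
    have hYi : Y i = X i + X j := by
      rw [hY, Function.update_of_ne hij, Function.update_self]
    have hYk : ∀ k, k ≠ i → k ≠ j → Y k = X k := fun k hki hkj => by
      rw [hY, Function.update_of_ne hkj, Function.update_of_ne hki]
    have split : ∀ s : Fin n → Lp ℝ 1 μ,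
        ∑ k, s k = ∑ k ∈ Finset.univ \ {i, j}, s k + (s i + s j) := by
      intro s
      rw [← Finset.sum_sdiff (Finset.subset_univ ({i, j} : Finset (Fin n))),
        Finset.sum_pair hij]
    have hdiffY : ∀ s t : Fin n → Lp ℝ 1 μ, (∀ k, k ≠ i → k ≠ j → s k = t k) →
        ∑ k ∈ Finset.univ \ {i, j}, s k = ∑ k ∈ Finset.univ \ {i, j}, t k := by
      intro s t hst
      refine Finset.sum_congr rfl fun k hk => ?_
      simp only [Finset.mem_sdiff, Finset.mem_insert, Finset.mem_singleton, not_or] at hk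
      exact hst k hk.2.1 hk.2.2
    have hsumY : ∑ k, Y k = ∑ k, X k := by
      rw [split Y, split X, hYi, hYj, hdiffY Y X hYk]
      abel
    have hs : ∑ k, A Y k = ∑ k, A X k := by rw [hsum, hsum, hsumY]
    rw [split (A Y), split (A X), hdiffY (A Y) (A X) (hOA X i j hij),
      hZP Y j hYj, add_zero] at hs
    exact add_left_cancel hs
  -- the key lemma
  have key : ∀ (a b : Fin n), a ≠ b → ∀ X : Fin n → Lp ℝ 1 μ,
      A (fun k => X (Equiv.swap a b k)) b = A X a := by
    intro a b hab X
    obtain ⟨c, hca, hcb⟩ := exists_c a b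
    set Y := fun k => X (Equiv.swap a b k) with hYdef
    have hYa : Y a = X b := by simp [hYdef]
    have hYb : Y b = X a := by simp [hYdef]
    have hYc : Y c = X c := by simp [hYdef, Equiv.swap_apply_of_ne_of_ne hca hcb]
    have hYk : ∀ k, k ≠ a → k ≠ b → Y k = X k := fun k hka hkb => by
      simp [hYdef, Equiv.swap_apply_of_ne_of_ne hka hkb]
    set U := Function.update (Function.update X c (X c + X b)) b 0 with hU
    have hUb : U b = 0 := Function.update_self _ _ _
    have hUa : U a = X a := by
      rw [hU, Function.update_of_ne hab, Function.update_of_ne (Ne.symm hca)]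
    set U' := Function.update (Function.update U b (U b + U a)) a 0 with hU'
    set V := Function.update (Function.update Y c (Y c + Y a)) a 0 with hV
    have hU'a : U' a = 0 := Function.update_self _ _ _
    have hU'b : U' b = X a := by
      rw [hU', Function.update_of_ne (Ne.symm hab), Function.update_self, hUb, hUa,
        zero_add]
    have hU'c : U' c = X c + X b := by
      rw [hU', Function.update_of_ne hca, Function.update_of_ne hcb, hU,
        Function.update_of_ne hcb, Function.update_self]
    have hU'k : ∀ k, k ≠ a → k ≠ b → k ≠ c → U' k = X k := fun k hka hkb hkc => by
      rw [hU', Function.update_of_ne hka, Function.update_of_ne hkb, hU,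
        Function.update_of_ne hkb, Function.update_of_ne hkc]
    have hVa : V a = 0 := Function.update_self _ _ _
    have hVb : V b = X a := by
      rw [hV, Function.update_of_ne (Ne.symm hab),
        Function.update_of_ne (fun h => hcb h.symm), hYb]
    have hVc : V c = X c + X b := by
      rw [hV, Function.update_of_ne hca, Function.update_self, hYc, hYa]
    have hVk : ∀ k, k ≠ a → k ≠ b → k ≠ c → V k = X k := fun k hka hkb hkc => by
      rw [hV, Function.update_of_ne hka, Function.update_of_ne hkc, hYk k hka hkb]
    have hUV : U' = V := by
      funext k
      by_cases hka : k = a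
      · rw [hka, hU'a, hVa]
      by_cases hkb : k = b
      · rw [hkb, hU'b, hVb]
      by_cases hkc : k = c
      · rw [hkc, hU'c, hVc]
      · rw [hU'k k hka hkb hkc, hVk k hka hkb hkc]
    calc A Y b = A V b := (hOA Y c a hca b (Ne.symm hcb) (Ne.symm hab)).symm
      _ = A U' b := by rw [hUV]
      _ = A U b + A U a := by rw [hU']; exact mergeI U b a (Ne.symm hab)
      _ = 0 + A X a := by rw [hZP U b hUb, hU, hOA X c b hcb a (Ne.symm hca) hab]
      _ = A X a := zero_add _
  -- the swap case
  have hswap : ∀ (a b : Fin n), a ≠ b → ∀ (X : Fin n → Lp ℝ 1 μ) (i : Fin n),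
      A (fun k => X (Equiv.swap a b k)) i = A X (Equiv.swap a b i) := by
    intro a b hab X i
    by_cases hia : i = a
    · rw [hia, Equiv.swap_apply_left]
      have h := key b a (Ne.symm hab) X
      rw [Equiv.swap_comm a b]
      exact h
    by_cases hib : i = b
    · rw [hib, Equiv.swap_apply_right]
      exact key a b hab X
    · rw [Equiv.swap_apply_of_ne_of_ne hia hib]
      set Y := fun k => X (Equiv.swap a b k) with hYdef
      have hYa : Y a = X b := by simp [hYdef]
      have hYb : Y b = X a := by simp [hYdef]
      have hM : Function.update (Function.update X a (X a + X b)) b 0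
          = Function.update (Function.update Y a (Y a + Y b)) b 0 := by
        funext k
        by_cases hkb : k = b
        · rw [hkb, Function.update_self, Function.update_self]
        by_cases hka : k = a
        · rw [hka, Function.update_of_ne hab, Function.update_of_ne hab,
            Function.update_self, Function.update_self, hYa, hYb, add_comm]
        · rw [Function.update_of_ne hkb, Function.update_of_ne hka,
            Function.update_of_ne hkb, Function.update_of_ne hka]
          simp [hYdef, Equiv.swap_apply_of_ne_of_ne hka hkb]
      calc A Y i = A (Function.update (Function.update Y a (Y a + Y b)) b 0) i :=
            (hOA Y a b hab i hia hib).symm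
        _ = A (Function.update (Function.update X a (X a + X b)) b 0) i := by rw [hM]
        _ = A X i := hOA X a b hab i hia hib
  -- induction over the permutation
  intro X π i
  have main : ∀ π : Equiv.Perm (Fin n), ∀ (X : Fin n → Lp ℝ 1 μ) (i : Fin n),
      A (fun k => X (π k)) i = A X (π i) := by
    intro π
    refine Equiv.Perm.swap_induction_on π ?_ ?_
    · intro X i
      simp
    · intro f x y hxy ih X i
      have h1 : (fun k => X ((Equiv.swap x y * f) k))
          = fun k => (fun m => X (Equiv.swap x y m)) (f k) := by
        funext k
        simp [Equiv.Perm.mul_apply]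
      rw [Equiv.Perm.mul_apply, h1, ih (fun m => X (Equiv.swap x y m)) i,
        hswap x y hxy X (f i)]
  exact main π X i
end
end

section
/- Fix a nonnegative integrable random variable S on (Ω, 𝓕, ℙ) and let B_S = {X ∈ L¹₊ : X ≤ S a.s.}. Any additive function φ : B_S → L¹₊ (i.e., φ(X + Y) = φ(X) + φ(Y) whenever X, Y, X + Y ∈ B_S) has a unique additive extension to the cone C_S = {λX : λ ≥ 0, X ∈ B_S} and a unique linear extension to the linear span of B_S. -/
open MeasureTheory

noncomputable section

noncomputable section

set_option linter.unusedSectionVars false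
namespace AddExtAux

variable {Ω : Type*} [MeasurableSpace Ω] {μ : Measure Ω} [IsProbabilityMeasure μ]

lemma smul_nn (c : ℝ) (hc : 0 ≤ c) (X : Lp ℝ 1 μ) (hX : 0 ≤ X) : 0 ≤ c • X := by
  rw [← Lp.coeFn_nonneg] at hX ⊢
  filter_upwards [hX, Lp.coeFn_smul c X] with ω h1 h2
  rw [h2]; exact mul_nonneg hc h1

lemma smul_mono (c : ℝ) (hc : 0 ≤ c) {X Y : Lp ℝ 1 μ} (h : X ≤ Y) : c • X ≤ c • Y := by
  have := smul_nn (μ := μ) c hc (Y - X) (by simpa using h)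
  rw [smul_sub] at this
  exact sub_nonneg.mp this

lemma arch (D V : Lp ℝ 1 μ) (hV : 0 ≤ V)
    (h : ∀ ε : ℝ, 0 < ε → -(ε • V) ≤ D ∧ D ≤ ε • V) : D = 0 := by
  have key : ∀ ε : ℝ, 0 < ε → ‖D‖ ≤ ε * ‖V‖ := by
    intro ε hε
    obtain ⟨h1, h2⟩ := h ε hε
    have habs : |D| ≤ |ε • V| := by
      have hεV : 0 ≤ ε • V := smul_nn ε hε.le V hV
      rw [abs_of_nonneg hεV]
      exact abs_le'.2 ⟨h2, neg_le.1 h1⟩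
    calc ‖D‖ ≤ ‖ε • V‖ := norm_le_norm_of_abs_le_abs habs
    _ = ε * ‖V‖ := by rw [norm_smul, Real.norm_of_nonneg hε.le]
  have : ‖D‖ ≤ 0 := by
    refine le_of_forall_pos_le_add ?_
    intro ε hε
    have h1 := key (ε / (‖V‖ + 1)) (by positivity)
    have hV1 : 0 ≤ ‖V‖ := norm_nonneg _
    calc ‖D‖ ≤ ε / (‖V‖ + 1) * ‖V‖ := h1
    _ ≤ ε := by rw [div_mul_eq_mul_div, div_le_iff₀ (by linarith)]; nlinarith
    _ ≤ 0 + ε := by linarith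
  simpa using norm_le_zero_iff.mp this


section Phi

variable (S : Lp ℝ 1 μ) (hS : 0 ≤ S) (φ : Lp ℝ 1 μ → Lp ℝ 1 μ)

  (hpos : ∀ X, 0 ≤ X → X ≤ S → 0 ≤ φ X)
  (hadd : ∀ X Y, 0 ≤ X → X ≤ S → 0 ≤ Y → Y ≤ S → X + Y ≤ S → φ (X + Y) = φ X + φ Y)

include hS hadd

lemma phi_zero : φ 0 = 0 := by
  have := hadd 0 0 le_rfl hS le_rfl hS (by simpa using hS)
  rw [add_zero] at this
  exact (left_eq_add.mp this)

include hpos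

lemma phi_mono {X Y : Lp ℝ 1 μ} (hX : 0 ≤ X) (hY : Y ≤ S) (hXY : X ≤ Y) : φ X ≤ φ Y := by
  have hYX : 0 ≤ Y - X := sub_nonneg.2 hXY
  have hXS : X ≤ S := hXY.trans hY
  have hYXS : Y - X ≤ S := (sub_le_self _ hX).trans hY
  have h := hadd X (Y - X) hX hXS hYX hYXS (by simpa using hY)
  rw [add_sub_cancel] at h
  rw [h]
  exact le_add_of_nonneg_right (hpos _ hYX hYXS)

lemma phi_nat (k : ℕ) {W : Lp ℝ 1 μ} (hW : 0 ≤ W)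
    (hkW : (k : ℝ) • W ≤ S) : φ ((k : ℝ) • W) = (k : ℝ) • φ W := by
  induction k with
  | zero => simpa using phi_zero S hS φ hadd
  | succ k ih =>
    have hstep : (k : ℝ) • W ≤ ((k : ℝ) + 1) • W := by
      rw [add_smul, one_smul]
      exact le_add_of_nonneg_right hW
    have hk1 : ((k : ℝ) + 1) • W ≤ S := by
      rw [Nat.cast_succ] at hkW; exact hkW
    have hkS : (k : ℝ) • W ≤ S := hstep.trans hk1
    have hknn : 0 ≤ (k : ℝ) • W := smul_nn (k:ℝ) (by positivity) W hW
    have hWS : W ≤ S := by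
      calc W = (1 : ℝ) • W := (one_smul _ _).symm
      _ ≤ ((k : ℝ) + 1) • W := by
        have h0 : ((1:ℝ)) • W ≤ ((k : ℝ) + 1) • W := by
          have : 0 ≤ ((k : ℝ) + 1 - 1) • W := smul_nn ((k:ℝ) + 1 - 1) (by have : (0:ℝ) ≤ (k:ℝ) := Nat.cast_nonneg k; linarith) W hW
          rw [sub_smul] at this
          exact sub_nonneg.mp this
        exact h0
      _ ≤ S := hk1
    have hk1' : (k : ℝ) • W + W ≤ S := by rw [add_smul, one_smul] at hk1; exact hk1
    have h := hadd ((k : ℝ) • W) W hknn hkS hW hWS hk1'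
    rw [Nat.cast_succ, add_smul, one_smul, h, ih hkS, add_smul, one_smul]

lemma phi_rat {Z : Lp ℝ 1 μ} (hZ : 0 ≤ Z) (hZS : Z ≤ S) (m n : ℕ) (hn : 0 < n) (hmn : m ≤ n) :
    φ (((m : ℝ) / n) • Z) = ((m : ℝ) / n) • φ Z := by
  set W : Lp ℝ 1 μ := ((n : ℝ)⁻¹) • Z with hWdef
  have hnR : (0:ℝ) < n := by exact_mod_cast hn
  have hW : 0 ≤ W := smul_nn ((n:ℝ)⁻¹) (by positivity) Z hZ
  have hmW : ((m : ℝ)) • W = ((m : ℝ) / n) • Z := by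
    rw [hWdef, smul_smul, div_eq_mul_inv]
  have hnW : ((n : ℝ)) • W = Z := by
    rw [hWdef, smul_smul, mul_inv_cancel₀ hnR.ne', one_smul]
  have hnWS : ((n : ℝ)) • W ≤ S := by rw [hnW]; exact hZS
  have hmWn : ((m : ℝ)) • W ≤ ((n : ℝ)) • W := by
    have : 0 ≤ ((n : ℝ) - (m : ℝ)) • W := smul_nn ((n : ℝ) - (m : ℝ)) (sub_nonneg.2 (by exact_mod_cast hmn)) W hW
    rw [sub_smul] at this
    exact sub_nonneg.mp this
  have hmWS : ((m : ℝ)) • W ≤ S := hmWn.trans hnWS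
  have h1 := phi_nat S hS φ hpos hadd m hW hmWS
  have h2 := phi_nat S hS φ hpos hadd n hW hnWS
  rw [hnW] at h2
  rw [← hmW, h1, h2, smul_smul, div_mul_cancel₀ _ hnR.ne']

lemma phi_homog {Z : Lp ℝ 1 μ} (hZ : 0 ≤ Z) (hZS : Z ≤ S) {t : ℝ} (ht0 : 0 ≤ t) (ht1 : t ≤ 1) :
    φ (t • Z) = t • φ Z := by
  -- rational case via num/den
  have hQ : ∀ q : ℚ, 0 ≤ q → q ≤ 1 → φ ((q : ℝ) • Z) = (q : ℝ) • φ Z := by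
    intro q hq0 hq1
    have hm : ((q.num.toNat : ℝ)) = (q.num : ℝ) := by
      exact_mod_cast congrArg (fun z : ℤ => (z : ℝ)) (Int.toNat_of_nonneg (Rat.num_nonneg.2 hq0))
    have hqR : (q : ℝ) = (q.num.toNat : ℝ) / (q.den : ℝ) := by
      rw [hm, Rat.cast_def]
    have hmn : q.num.toNat ≤ q.den := by
      have hd : (0:ℝ) < (q.den : ℝ) := by exact_mod_cast q.pos
      have h1 : ((q.num : ℝ)) / (q.den : ℝ) ≤ 1 := by
        rw [← Rat.cast_def]; exact_mod_cast hq1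
      have h2 : (q.num : ℝ) ≤ (q.den : ℝ) := by
        rw [div_le_one hd] at h1; exact h1
      have h3 : q.num ≤ (q.den : ℤ) := by exact_mod_cast h2
      omega
    rw [hqR]
    exact phi_rat S hS φ hpos hadd hZ hZS _ _ q.pos hmn
  have hφZ : 0 ≤ φ Z := hpos Z hZ hZS
  have smZ : ∀ {a b : ℝ}, a ≤ b → a • φ Z ≤ b • φ Z := by
    intro a b h
    have := smul_nn (b - a) (sub_nonneg.2 h) (φ Z) hφZ
    rw [sub_smul] at this
    exact sub_nonneg.mp this
  have smV : ∀ {a b : ℝ}, a ≤ b → a • Z ≤ b • Z := by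
    intro a b h
    have := smul_nn (b - a) (sub_nonneg.2 h) Z hZ
    rw [sub_smul] at this
    exact sub_nonneg.mp this
  rcases eq_or_lt_of_le ht1 with h1 | ht1'
  · rw [h1, one_smul, one_smul]
  rcases eq_or_lt_of_le ht0 with h0 | ht0'
  · rw [← h0, zero_smul, zero_smul]
    exact phi_zero S hS φ hadd
  have htZS : t • Z ≤ S := by
    calc t • Z ≤ (1:ℝ) • Z := smV ht1
    _ = Z := one_smul _ _
    _ ≤ S := hZS
  have htZ : 0 ≤ t • Z := smul_nn t ht0 Z hZ
  have key : φ (t • Z) - t • φ Z = 0 := by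
    apply arch _ (φ Z) hφZ
    intro ε hε
    obtain ⟨q, hq1, hq2⟩ := exists_rat_btwn (show max 0 (t - ε) < t from max_lt ht0' (by linarith))
    obtain ⟨q', hq'1, hq'2⟩ := exists_rat_btwn (show t < min 1 (t + ε) from lt_min ht1' (by linarith))
    have hq0 : (0:ℝ) ≤ (q:ℝ) := le_of_lt (lt_of_le_of_lt (le_max_left _ _) hq1)
    have hqle1 : ((q:ℝ)) ≤ 1 := le_of_lt (lt_trans hq2 ht1')
    have hq'0 : (0:ℝ) ≤ (q':ℝ) := le_of_lt (lt_trans ht0' hq'1)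
    have hq'le1 : ((q':ℝ)) ≤ 1 := le_of_lt (lt_of_lt_of_le hq'2 (min_le_left _ _))
    have hqeps : t - (q:ℝ) ≤ ε := by
      have := lt_of_le_of_lt (le_max_right 0 (t - ε)) hq1
      linarith
    have hq'eps : (q':ℝ) - t ≤ ε := by
      have := lt_of_lt_of_le hq'2 (min_le_right 1 (t + ε))
      linarith
    have hqQ : φ ((q:ℝ) • Z) = (q:ℝ) • φ Z := by
      exact_mod_cast hQ q (by exact_mod_cast hq0) (by exact_mod_cast hqle1)
    have hq'Q : φ ((q':ℝ) • Z) = (q':ℝ) • φ Z := by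
      exact_mod_cast hQ q' (by exact_mod_cast hq'0) (by exact_mod_cast hq'le1)
    have hmono1 : (q:ℝ) • φ Z ≤ φ (t • Z) := by
      rw [← hqQ]
      exact phi_mono S hS φ hpos hadd (smul_nn _ hq0 Z hZ) htZS (smV hq2.le)
    have hmono2 : φ (t • Z) ≤ (q':ℝ) • φ Z := by
      rw [← hq'Q]
      refine phi_mono S hS φ hpos hadd htZ ?_ (smV hq'1.le)
      calc (q':ℝ) • Z ≤ (1:ℝ) • Z := smV hq'le1
      _ = Z := one_smul _ _
      _ ≤ S := hZS
    constructor
    · have h3 : (q:ℝ) • φ Z - t • φ Z ≤ φ (t • Z) - t • φ Z := sub_le_sub_right hmono1 _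
      rw [← sub_smul] at h3
      have h4 : (-ε) • φ Z ≤ ((q:ℝ) - t) • φ Z := smZ (by linarith)
      rw [neg_smul] at h4
      exact le_trans h4 h3
    · have h3 : φ (t • Z) - t • φ Z ≤ (q':ℝ) • φ Z - t • φ Z := sub_le_sub_right hmono2 _
      rw [← sub_smul] at h3
      exact le_trans h3 (smZ (by linarith))
  exact sub_eq_zero.mp key


include hS

omit hpos hadd in
lemma smul_le_S {a : ℝ} (ha : 0 ≤ a) (ha1 : a ≤ 1) {Z : Lp ℝ 1 μ} (hZ : 0 ≤ Z) (hZS : Z ≤ S) :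
    a • Z ≤ S := by
  have h1 : a • Z ≤ a • S := by
    have := smul_nn a ha (S - Z) (sub_nonneg.2 hZS)
    rw [smul_sub] at this
    exact sub_nonneg.mp this
  have h2 : a • S ≤ S := by
    have := smul_nn (1 - a) (sub_nonneg.2 ha1) S hS
    rw [sub_smul, one_smul] at this
    exact sub_nonneg.mp this
  exact h1.trans h2

omit hpos hadd in
lemma wd_le {c c' : ℝ} {Z Z' : Lp ℝ 1 μ} (hc : 0 ≤ c) (hZ : 0 ≤ Z) (hZS : Z ≤ S)
    (hc' : 0 ≤ c') (hZ' : 0 ≤ Z') (hZS' : Z' ≤ S)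
    (hcc : c ≤ c') (heq : c • Z = c' • Z')
    (hpos : ∀ X, 0 ≤ X → X ≤ S → 0 ≤ φ X)
    (hadd : ∀ X Y, 0 ≤ X → X ≤ S → 0 ≤ Y → Y ≤ S → X + Y ≤ S → φ (X + Y) = φ X + φ Y) :
    c • φ Z = c' • φ Z' := by
  rcases eq_or_lt_of_le hc' with h0 | h0
  · have hc0 : c = 0 := le_antisymm (hcc.trans h0.symm.le) hc
    rw [hc0, ← h0, zero_smul, zero_smul]
  · have hZ'eq : Z' = (c / c') • Z := by
      have : (c'⁻¹) • (c • Z) = (c'⁻¹) • (c' • Z') := by rw [heq]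
      rw [smul_smul, smul_smul, inv_mul_cancel₀ h0.ne', one_smul] at this
      rw [div_eq_inv_mul]; exact this.symm
    have ht0 : 0 ≤ c / c' := div_nonneg hc h0.le
    have ht1 : c / c' ≤ 1 := (div_le_one h0).2 hcc
    rw [hZ'eq, phi_homog S hS φ hpos hadd hZ hZS ht0 ht1, smul_smul, mul_div_cancel₀ _ h0.ne']

lemma wd {c c' : ℝ} {Z Z' : Lp ℝ 1 μ} (hc : 0 ≤ c) (hZ : 0 ≤ Z) (hZS : Z ≤ S)
    (hc' : 0 ≤ c') (hZ' : 0 ≤ Z') (hZS' : Z' ≤ S)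
    (heq : c • Z = c' • Z') : c • φ Z = c' • φ Z' := by
  rcases le_total c c' with h | h
  · exact wd_le S hS φ hc hZ hZS hc' hZ' hZS' h heq hpos hadd
  · exact (wd_le S hS φ hc' hZ' hZS' hc hZ hZS h heq.symm hpos hadd).symm

lemma combine {c c' : ℝ} {Z Z' : Lp ℝ 1 μ} (hc : 0 ≤ c) (hZ : 0 ≤ Z) (hZS : Z ≤ S)
    (hc' : 0 ≤ c') (hZ' : 0 ≤ Z') (hZS' : Z' ≤ S) :
    ∃ s : ℝ, ∃ W : Lp ℝ 1 μ, 0 ≤ s ∧ 0 ≤ W ∧ W ≤ S ∧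
      c • Z + c' • Z' = s • W ∧ s • φ W = c • φ Z + c' • φ Z' := by
  rcases eq_or_lt_of_le (by positivity : (0:ℝ) ≤ c + c') with h0 | h0
  · have hc0 : c = 0 := by linarith
    have hc'0 : c' = 0 := by linarith
    refine ⟨0, 0, le_rfl, le_rfl, hS, ?_, ?_⟩ <;> simp [hc0, hc'0]
  · set s := c + c' with hs
    have hcs0 : 0 ≤ c / s := by positivity
    have hcs1 : c / s ≤ 1 := by rw [div_le_one h0]; linarith
    have hc's0 : 0 ≤ c' / s := by positivity
    have hc's1 : c' / s ≤ 1 := by rw [div_le_one h0]; linarith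
    set U := (c / s) • Z with hU
    set U' := (c' / s) • Z' with hU'
    have hUnn : 0 ≤ U := smul_nn _ hcs0 Z hZ
    have hU'nn : 0 ≤ U' := smul_nn _ hc's0 Z' hZ'
    have hUS : U ≤ S := smul_le_S S hS hcs0 hcs1 hZ hZS
    have hU'S : U' ≤ S := smul_le_S S hS hc's0 hc's1 hZ' hZS'
    have hsumS : U + U' ≤ S := by
      have h1 : U ≤ (c / s) • S := by
        have := smul_nn (c / s) hcs0 (S - Z) (sub_nonneg.2 hZS)
        rw [smul_sub] at this
        exact sub_nonneg.mp this
      have h2 : U' ≤ (c' / s) • S := by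
        have := smul_nn (c' / s) hc's0 (S - Z') (sub_nonneg.2 hZS')
        rw [smul_sub] at this
        exact sub_nonneg.mp this
      calc U + U' ≤ (c / s) • S + (c' / s) • S := add_le_add h1 h2
      _ = ((c / s) + (c' / s)) • S := (add_smul _ _ _).symm
      _ = S := by rw [← add_div, div_self h0.ne', one_smul]
    refine ⟨s, U + U', h0.le, add_nonneg hUnn hU'nn, hsumS, ?_, ?_⟩
    · rw [smul_add, hU, hU', smul_smul, smul_smul, mul_div_cancel₀ _ h0.ne',
        mul_div_cancel₀ _ h0.ne']
    · rw [hadd U U' hUnn hUS hU'nn hU'S hsumS, hU, hU',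
        phi_homog S hS φ hpos hadd hZ hZS hcs0 hcs1,
        phi_homog S hS φ hpos hadd hZ' hZS' hc's0 hc's1,
        smul_add, smul_smul, smul_smul, mul_div_cancel₀ _ h0.ne', mul_div_cancel₀ _ h0.ne']

end Phi

/-- the cone generated by B_S -/
def cone (S : Lp ℝ 1 μ) : Set (Lp ℝ 1 μ) :=
  {Y : Lp ℝ 1 μ | ∃ c : ℝ, 0 ≤ c ∧ ∃ Z, 0 ≤ Z ∧ Z ≤ S ∧ Y = c • Z}

open Classical in
/-- the additive extension to the cone -/
def psi (S : Lp ℝ 1 μ) (φ : Lp ℝ 1 μ → Lp ℝ 1 μ) (X : Lp ℝ 1 μ) : Lp ℝ 1 μ :=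
  if h : X ∈ cone S then
    h.choose • φ h.choose_spec.2.choose
  else 0

section Psi

variable (S : Lp ℝ 1 μ) (hS : 0 ≤ S) (φ : Lp ℝ 1 μ → Lp ℝ 1 μ)
  (hpos : ∀ X, 0 ≤ X → X ≤ S → 0 ≤ φ X)
  (hadd : ∀ X Y, 0 ≤ X → X ≤ S → 0 ≤ Y → Y ≤ S → X + Y ≤ S → φ (X + Y) = φ X + φ Y)

include hS hpos hadd

lemma psi_eq {c : ℝ} {Z X : Lp ℝ 1 μ} (hc : 0 ≤ c) (hZ : 0 ≤ Z) (hZS : Z ≤ S)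
    (hX : X = c • Z) : psi S φ X = c • φ Z := by
  have h : X ∈ cone S := ⟨c, hc, Z, hZ, hZS, hX⟩
  classical
  unfold psi
  rw [dif_pos h]
  exact wd S hS φ hpos hadd h.choose_spec.1 h.choose_spec.2.choose_spec.1
    h.choose_spec.2.choose_spec.2.1 hc hZ hZS
    (h.choose_spec.2.choose_spec.2.2.symm.trans hX)

lemma psi_on_B {X : Lp ℝ 1 μ} (hX : 0 ≤ X) (hXS : X ≤ S) : psi S φ X = φ X := by
  rw [psi_eq S hS φ hpos hadd zero_le_one hX hXS (one_smul ℝ X).symm, one_smul]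

lemma psi_zero : psi S φ 0 = 0 := by
  rw [psi_eq S hS φ hpos hadd le_rfl le_rfl hS (by rw [zero_smul]), zero_smul]

lemma psi_nonneg {X : Lp ℝ 1 μ} (hX : X ∈ cone S) : 0 ≤ psi S φ X := by
  obtain ⟨c, hc, Z, hZ, hZS, hXeq⟩ := hX
  rw [psi_eq S hS φ hpos hadd hc hZ hZS hXeq]
  exact smul_nn c hc _ (hpos Z hZ hZS)

lemma psi_add {X Y : Lp ℝ 1 μ} (hX : X ∈ cone S) (hY : Y ∈ cone S) :
    psi S φ (X + Y) = psi S φ X + psi S φ Y := by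
  obtain ⟨c, hc, Z, hZ, hZS, hXeq⟩ := hX
  obtain ⟨c', hc', Z', hZ', hZS', hYeq⟩ := hY
  obtain ⟨s, W, hs, hW, hWS, hrep, hval⟩ :=
    combine S hS φ hpos hadd hc hZ hZS hc' hZ' hZS'
  rw [psi_eq S hS φ hpos hadd hs hW hWS (by rw [hXeq, hYeq, hrep]), hval,
    psi_eq S hS φ hpos hadd hc hZ hZS hXeq, psi_eq S hS φ hpos hadd hc' hZ' hZS' hYeq]

lemma psi_smul {a : ℝ} (ha : 0 ≤ a) {X : Lp ℝ 1 μ} (hX : X ∈ cone S) :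
    psi S φ (a • X) = a • psi S φ X := by
  obtain ⟨c, hc, Z, hZ, hZS, hXeq⟩ := hX
  rw [psi_eq S hS φ hpos hadd hc hZ hZS hXeq,
    psi_eq S hS φ hpos hadd (mul_nonneg ha hc) hZ hZS (by rw [hXeq, smul_smul]), smul_smul]

end Psi

lemma cone_add {S X Y : Lp ℝ 1 μ} (hS : 0 ≤ S) (hX : X ∈ cone S) (hY : Y ∈ cone S) :
    X + Y ∈ cone S := by
  obtain ⟨c, hc, Z, hZ, hZS, hXeq⟩ := hX
  obtain ⟨c', hc', Z', hZ', hZS', hYeq⟩ := hY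
  obtain ⟨s, W, hs, hW, hWS, hrep, _⟩ :=
    combine S hS (fun _ => 0) (fun _ _ _ => le_rfl) (fun _ _ _ _ _ _ _ => by simp)
      hc hZ hZS hc' hZ' hZS'
  exact ⟨s, hs, W, hW, hWS, by rw [hXeq, hYeq, hrep]⟩

omit [IsProbabilityMeasure μ] in
lemma cone_smul {S X : Lp ℝ 1 μ} {a : ℝ} (ha : 0 ≤ a) (hX : X ∈ cone S) :
    a • X ∈ cone S := by
  obtain ⟨c, hc, Z, hZ, hZS, hXeq⟩ := hX
  exact ⟨a * c, mul_nonneg ha hc, Z, hZ, hZS, by rw [hXeq, smul_smul]⟩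

omit [IsProbabilityMeasure μ] in
lemma cone_zero {S : Lp ℝ 1 μ} (hS : 0 ≤ S) : (0 : Lp ℝ 1 μ) ∈ cone S :=
  ⟨0, le_rfl, 0, le_rfl, hS, by rw [zero_smul]⟩

omit [IsProbabilityMeasure μ] in
lemma B_sub_cone {S X : Lp ℝ 1 μ} (hX : 0 ≤ X) (hXS : X ≤ S) : X ∈ cone S :=
  ⟨1, zero_le_one, X, hX, hXS, (one_smul ℝ X).symm⟩


section Unique

variable (S : Lp ℝ 1 μ) (hS : 0 ≤ S) (φ : Lp ℝ 1 μ → Lp ℝ 1 μ)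
  (hpos : ∀ X, 0 ≤ X → X ≤ S → 0 ≤ φ X)
  (hadd : ∀ X Y, 0 ≤ X → X ≤ S → 0 ≤ Y → Y ≤ S → X + Y ≤ S → φ (X + Y) = φ X + φ Y)

lemma addCone_zero (hS : 0 ≤ S) (ψ' : Lp ℝ 1 μ → Lp ℝ 1 μ)
    (hadd' : ∀ X Y, X ∈ cone S → Y ∈ cone S → ψ' (X + Y) = ψ' X + ψ' Y) : ψ' 0 = 0 := by
  have h := hadd' 0 0 (cone_zero hS) (cone_zero hS)
  rw [add_zero] at h
  exact (left_eq_add.mp h)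

lemma addCone_nsmul (hS : 0 ≤ S) (ψ' : Lp ℝ 1 μ → Lp ℝ 1 μ)
    (hadd' : ∀ X Y, X ∈ cone S → Y ∈ cone S → ψ' (X + Y) = ψ' X + ψ' Y)
    (k : ℕ) {U : Lp ℝ 1 μ} (hU : U ∈ cone S) :
    ψ' ((k : ℝ) • U) = (k : ℝ) • ψ' U := by
  induction k with
  | zero => rw [Nat.cast_zero, zero_smul, zero_smul, addCone_zero S hS ψ' hadd']
  | succ k ih =>
    rw [Nat.cast_succ, add_smul, one_smul, hadd' _ _ (cone_smul (Nat.cast_nonneg k) hU) hU,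
      ih, add_smul, one_smul]

include hS hpos hadd in
lemma psi_unique (ψ' : Lp ℝ 1 μ → Lp ℝ 1 μ)
    (hB : ∀ X, 0 ≤ X → X ≤ S → ψ' X = φ X)
    (hadd' : ∀ X Y, X ∈ cone S → Y ∈ cone S → ψ' (X + Y) = ψ' X + ψ' Y)
    {X : Lp ℝ 1 μ} (hX : X ∈ cone S) : ψ' X = psi S φ X := by
  obtain ⟨c, hc, Z, hZ, hZS, hXeq⟩ := hX
  set n : ℕ := ⌈c⌉₊ + 1 with hn
  have hcn : c ≤ (n : ℝ) := by
    calc c ≤ (⌈c⌉₊ : ℝ) := Nat.le_ceil c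
    _ ≤ (n : ℝ) := by rw [hn]; push_cast; linarith
  have hn0 : (0:ℝ) < (n : ℝ) := by positivity
  have hcn0 : 0 ≤ c / n := by positivity
  have hcn1 : c / n ≤ 1 := by rw [div_le_one hn0]; exact hcn
  set U : Lp ℝ 1 μ := (c / n) • Z with hU
  have hUnn : 0 ≤ U := smul_nn _ hcn0 Z hZ
  have hUS : U ≤ S := smul_le_S S hS hcn0 hcn1 hZ hZS
  have hXU : X = (n : ℝ) • U := by
    rw [hXeq, hU, smul_smul, mul_div_cancel₀ _ hn0.ne']
  have hR : psi S φ X = c • φ Z := psi_eq S hS φ hpos hadd hc hZ hZS hXeq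
  have hL : ψ' X = c • φ Z := by
    rw [hXU, addCone_nsmul S hS ψ' hadd' n (B_sub_cone hUnn hUS), hB U hUnn hUS,
      hU, phi_homog S hS φ hpos hadd hZ hZS hcn0 hcn1, smul_smul,
      mul_div_cancel₀ _ hn0.ne']
  rw [hL, hR]

end Unique

section Linear

variable (S : Lp ℝ 1 μ) (hS : 0 ≤ S) (φ : Lp ℝ 1 μ → Lp ℝ 1 μ)
  (hpos : ∀ X, 0 ≤ X → X ≤ S → 0 ≤ φ X)
  (hadd : ∀ X Y, 0 ≤ X → X ≤ S → 0 ≤ Y → Y ≤ S → X + Y ≤ S → φ (X + Y) = φ X + φ Y)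

lemma rep_of_mem_span (hS : 0 ≤ S) {v : Lp ℝ 1 μ}
    (hv : v ∈ Submodule.span ℝ {X : Lp ℝ 1 μ | 0 ≤ X ∧ X ≤ S}) :
    ∃ X Y, X ∈ cone S ∧ Y ∈ cone S ∧ v = X - Y := by
  induction hv using Submodule.span_induction with
  | mem x h => exact ⟨x, 0, B_sub_cone h.1 h.2, cone_zero hS, by rw [sub_zero]⟩
  | zero => exact ⟨0, 0, cone_zero hS, cone_zero hS, by rw [sub_zero]⟩
  | add x y hx hy ihx ihy =>
    obtain ⟨X, Y, hX, hY, hxeq⟩ := ihx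
    obtain ⟨X', Y', hX', hY', hyeq⟩ := ihy
    exact ⟨X + X', Y + Y', cone_add hS hX hX', cone_add hS hY hY',
      by rw [hxeq, hyeq]; abel⟩
  | smul a x hx ihx =>
    obtain ⟨X, Y, hX, hY, hxeq⟩ := ihx
    rcases le_total 0 a with ha | ha
    · exact ⟨a • X, a • Y, cone_smul ha hX, cone_smul ha hY,
        by rw [hxeq, smul_sub]⟩
    · refine ⟨(-a) • Y, (-a) • X, cone_smul (neg_nonneg.2 ha) hY,
        cone_smul (neg_nonneg.2 ha) hX, ?_⟩
      rw [hxeq, smul_sub, neg_smul, neg_smul]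
      abel

include hS hpos hadd in
lemma diff_wd {X Y X' Y' : Lp ℝ 1 μ} (hX : X ∈ cone S) (hY : Y ∈ cone S)
    (hX' : X' ∈ cone S) (hY' : Y' ∈ cone S) (heq : X - Y = X' - Y') :
    psi S φ X - psi S φ Y = psi S φ X' - psi S φ Y' := by
  have h1 : X + Y' = X' + Y := sub_eq_sub_iff_add_eq_add.mp heq
  have h2 := psi_add S hS φ hpos hadd hX hY'
  have h3 := psi_add S hS φ hpos hadd hX' hY
  rw [h1, h3] at h2
  exact sub_eq_sub_iff_add_eq_add.mpr h2.symm

open Classical in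
/-- the linear extension to the span, as a bare function -/
def Lfun (S : Lp ℝ 1 μ) (φ : Lp ℝ 1 μ → Lp ℝ 1 μ) (v : Lp ℝ 1 μ) : Lp ℝ 1 μ :=
  if h : ∃ X Y, X ∈ cone S ∧ Y ∈ cone S ∧ v = X - Y then
    psi S φ h.choose - psi S φ h.choose_spec.choose
  else 0

include hS hpos hadd

lemma Lfun_eq {X Y v : Lp ℝ 1 μ} (hX : X ∈ cone S) (hY : Y ∈ cone S) (hv : v = X - Y) :
    Lfun S φ v = psi S φ X - psi S φ Y := by
  have h : ∃ X Y, X ∈ cone S ∧ Y ∈ cone S ∧ v = X - Y := ⟨X, Y, hX, hY, hv⟩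
  classical
  unfold Lfun
  rw [dif_pos h]
  exact diff_wd S hS φ hpos hadd h.choose_spec.choose_spec.1
    h.choose_spec.choose_spec.2.1 hX hY
    (h.choose_spec.choose_spec.2.2.symm.trans hv)

lemma Lfun_add {u v : Lp ℝ 1 μ}
    (hu : u ∈ Submodule.span ℝ {X : Lp ℝ 1 μ | 0 ≤ X ∧ X ≤ S})
    (hv : v ∈ Submodule.span ℝ {X : Lp ℝ 1 μ | 0 ≤ X ∧ X ≤ S}) :
    Lfun S φ (u + v) = Lfun S φ u + Lfun S φ v := by
  obtain ⟨X, Y, hX, hY, hueq⟩ := rep_of_mem_span S hS hu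
  obtain ⟨X', Y', hX', hY', hveq⟩ := rep_of_mem_span S hS hv
  rw [Lfun_eq S hS φ hpos hadd hX hY hueq, Lfun_eq S hS φ hpos hadd hX' hY' hveq,
    Lfun_eq S hS φ hpos hadd (cone_add hS hX hX') (cone_add hS hY hY')
      (by rw [hueq, hveq]; abel),
    psi_add S hS φ hpos hadd hX hX', psi_add S hS φ hpos hadd hY hY']
  abel

lemma Lfun_smul (a : ℝ) {v : Lp ℝ 1 μ}
    (hv : v ∈ Submodule.span ℝ {X : Lp ℝ 1 μ | 0 ≤ X ∧ X ≤ S}) :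
    Lfun S φ (a • v) = a • Lfun S φ v := by
  obtain ⟨X, Y, hX, hY, hveq⟩ := rep_of_mem_span S hS hv
  rw [Lfun_eq S hS φ hpos hadd hX hY hveq]
  rcases le_total 0 a with ha | ha
  · rw [Lfun_eq S hS φ hpos hadd (cone_smul ha hX) (cone_smul ha hY)
      (by rw [hveq, smul_sub]),
      psi_smul S hS φ hpos hadd ha hX, psi_smul S hS φ hpos hadd ha hY, smul_sub]
  · have ha' : 0 ≤ -a := neg_nonneg.2 ha
    rw [Lfun_eq S hS φ hpos hadd (cone_smul ha' hY) (cone_smul ha' hX)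
      (by rw [hveq, smul_sub, neg_smul, neg_smul]; abel),
      psi_smul S hS φ hpos hadd ha' hY, psi_smul S hS φ hpos hadd ha' hX,
      neg_smul, neg_smul, smul_sub]
    abel

/-- the linear extension as a linear map on the span -/
def Lmap : (Submodule.span ℝ {X : Lp ℝ 1 μ | 0 ≤ X ∧ X ≤ S}) →ₗ[ℝ] Lp ℝ 1 μ where
  toFun v := Lfun S φ v.1
  map_add' u v := Lfun_add S hS φ hpos hadd u.2 v.2
  map_smul' a v := Lfun_smul S hS φ hpos hadd a v.2

lemma Lmap_on_B {X : Lp ℝ 1 μ} (hX : 0 ≤ X) (hXS : X ≤ S)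
    (h : X ∈ Submodule.span ℝ {X : Lp ℝ 1 μ | 0 ≤ X ∧ X ≤ S}) :
    Lmap S hS φ hpos hadd ⟨X, h⟩ = φ X := by
  show Lfun S φ X = φ X
  rw [Lfun_eq S hS φ hpos hadd (B_sub_cone hX hXS) (cone_zero hS) (by rw [sub_zero]),
    psi_zero S hS φ hpos hadd, psi_on_B S hS φ hpos hadd hX hXS, sub_zero]

end Linear

end AddExtAux



open AddExtAux

/-- for S ∈ L¹₊ and B_S = {X ∈ L¹₊ : X ≤ S}, any additive map
φ : B_S → L¹₊ has a unique additive extension to the cone C_S generated by B_S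
(with values in L¹₊) and a unique linear extension to the linear span of B_S.
(The order on L¹ is the a.e. order, so `0 ≤ X` encodes membership in L¹₊.) -/
theorem additive_extension_from_BS
    {Ω : Type*} [MeasurableSpace Ω] {μ : Measure Ω} [IsProbabilityMeasure μ]
    (S : Lp ℝ 1 μ) (hS : 0 ≤ S)
    (φ : Lp ℝ 1 μ → Lp ℝ 1 μ)
    -- φ maps B_S into L¹₊
    (hpos : ∀ X, 0 ≤ X → X ≤ S → 0 ≤ φ X)
    -- φ is additive on B_S
    (hadd : ∀ X Y, 0 ≤ X → X ≤ S → 0 ≤ Y → Y ≤ S → X + Y ≤ S → φ (X + Y) = φ X + φ Y) :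
    -- a unique additive extension (valued in L¹₊) on the cone C_S
    (∃ ψ : Lp ℝ 1 μ → Lp ℝ 1 μ,
      ((∀ X, 0 ≤ X → X ≤ S → ψ X = φ X) ∧
       (∀ X, X ∈ {Y : Lp ℝ 1 μ | ∃ c : ℝ, 0 ≤ c ∧ ∃ Z, 0 ≤ Z ∧ Z ≤ S ∧ Y = c • Z} → 0 ≤ ψ X) ∧
       (∀ X Y, X ∈ {Y : Lp ℝ 1 μ | ∃ c : ℝ, 0 ≤ c ∧ ∃ Z, 0 ≤ Z ∧ Z ≤ S ∧ Y = c • Z} →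
               Y ∈ {Y : Lp ℝ 1 μ | ∃ c : ℝ, 0 ≤ c ∧ ∃ Z, 0 ≤ Z ∧ Z ≤ S ∧ Y = c • Z} →
               ψ (X + Y) = ψ X + ψ Y)) ∧
      (∀ ψ' : Lp ℝ 1 μ → Lp ℝ 1 μ,
        ((∀ X, 0 ≤ X → X ≤ S → ψ' X = φ X) ∧
         (∀ X, X ∈ {Y : Lp ℝ 1 μ | ∃ c : ℝ, 0 ≤ c ∧ ∃ Z, 0 ≤ Z ∧ Z ≤ S ∧ Y = c • Z} → 0 ≤ ψ' X) ∧
         (∀ X Y, X ∈ {Y : Lp ℝ 1 μ | ∃ c : ℝ, 0 ≤ c ∧ ∃ Z, 0 ≤ Z ∧ Z ≤ S ∧ Y = c • Z} →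
                 Y ∈ {Y : Lp ℝ 1 μ | ∃ c : ℝ, 0 ≤ c ∧ ∃ Z, 0 ≤ Z ∧ Z ≤ S ∧ Y = c • Z} →
                 ψ' (X + Y) = ψ' X + ψ' Y)) →
        ∀ X, X ∈ {Y : Lp ℝ 1 μ | ∃ c : ℝ, 0 ≤ c ∧ ∃ Z, 0 ≤ Z ∧ Z ≤ S ∧ Y = c • Z} →
          ψ' X = ψ X)) ∧
    -- a unique linear extension on the linear span of B_S
    (∃! L : (Submodule.span ℝ {X : Lp ℝ 1 μ | 0 ≤ X ∧ X ≤ S}) →ₗ[ℝ] Lp ℝ 1 μ,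
      ∀ X (hX : X ∈ {X : Lp ℝ 1 μ | 0 ≤ X ∧ X ≤ S}),
        L ⟨X, Submodule.subset_span hX⟩ = φ X) := by
  constructor
  · refine ⟨psi S φ, ⟨fun X hX hXS => psi_on_B S hS φ hpos hadd hX hXS,
      fun X hX => psi_nonneg S hS φ hpos hadd hX,
      fun X Y hX hY => psi_add S hS φ hpos hadd hX hY⟩, ?_⟩
    intro ψ' ⟨h1, _, h3⟩ X hX
    exact psi_unique S hS φ hpos hadd ψ' h1 h3 hX
  · refine ⟨Lmap S hS φ hpos hadd, fun X hX => Lmap_on_B S hS φ hpos hadd hX.1 hX.2 _, ?_⟩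
    intro L' hL'
    apply LinearMap.ext
    rintro ⟨v, hv⟩
    induction hv using Submodule.span_induction with
    | mem x h => exact (hL' x h).trans (Lmap_on_B S hS φ hpos hadd h.1 h.2 _).symm
    | zero =>
      have h0 : (⟨0, Submodule.zero_mem _⟩ :
          Submodule.span ℝ {X : Lp ℝ 1 μ | 0 ≤ X ∧ X ≤ S}) = 0 := rfl
      rw [h0, map_zero, map_zero]
    | add x y hx hy ihx ihy =>
      have h0 : (⟨x + y, Submodule.add_mem _ hx hy⟩ :
          Submodule.span ℝ {X : Lp ℝ 1 μ | 0 ≤ X ∧ X ≤ S}) =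
          ⟨x, hx⟩ + ⟨y, hy⟩ := rfl
      rw [h0, map_add, map_add, ihx, ihy]
    | smul a x hx ihx =>
      have h0 : (⟨a • x, Submodule.smul_mem _ a hx⟩ :
          Submodule.span ℝ {X : Lp ℝ 1 μ | 0 ≤ X ∧ X ≤ S}) =
          a • (⟨x, hx⟩ : Submodule.span ℝ {X : Lp ℝ 1 μ | 0 ≤ X ∧ X ≤ S}) := rfl
      rw [h0, LinearMap.map_smul, LinearMap.map_smul, ihx]
end
end
end

section
/- If a risk sharing rule A satisfies Axioms AF and RF, then it satisfies Property CP: for every X ∈ 𝒳ⁿ and every i, if Xᵢ = x a.s. for some x ∈ ℝ, then Aᵢ^X = x a.s. In particular, for every X ∈ 𝒳 one has A^{(X, 0, …, 0)} = (X, 0, …, 0), i.e., A₁^{(X,0,…,0)} = X a.s. and Aⱼ^{(X,0,…,0)} = 0 a.s. for all j ≠ 1. -/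
open MeasureTheory

noncomputable section

lemma myLp_coeFn_sum {Ω : Type*} [MeasurableSpace Ω] {μ : Measure Ω} {ι : Type*}
    (s : Finset ι) (f : ι → Lp ℝ 1 μ) :
    ((∑ i ∈ s, f i : Lp ℝ 1 μ) : Ω → ℝ) =ᵐ[μ] fun ω => ∑ i ∈ s, (f i : Ω → ℝ) ω := by
  classical
  induction s using Finset.induction with
  | empty => simp only [Finset.sum_empty]; exact Lp.coeFn_zero (E := ℝ) (p := 1) (μ := μ)
  | insert _ _ hx ih =>
    rename_i a s
    rw [Finset.sum_insert hx]
    filter_upwards [Lp.coeFn_add (∑ i ∈ s, f i) (f a), ih] with ω h1 h2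
    rw [Finset.sum_insert hx]
    have : (↑(∑ i ∈ s, f i + f a) : Ω → ℝ) ω = (↑(∑ i ∈ s, f i) : Ω → ℝ) ω + (f a : Ω → ℝ) ω := by
      simpa using h1
    simp only [add_comm (f a)]
    rw [this, h2]; ring

/-- if a risk sharing rule satisfies Axioms AF and RF, then it satisfies
Property CP (constant preserving); in particular A^{(X,0,…,0)} = (X,0,…,0). -/
theorem af_rf_imply_cp
    {Ω : Type*} [MeasurableSpace Ω] {μ : Measure Ω} [IsProbabilityMeasure μ]
    {n : ℕ} (hn : 3 ≤ n)
    (A : (Fin n → Lp ℝ 1 μ) → (Fin n → Lp ℝ 1 μ))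
    (hsum : ∀ X, ∑ i, A X i = ∑ i, X i)
    -- Axiom AF
    (hAF : ∀ X (i : Fin n), ∫ ω, (A X i : Ω → ℝ) ω ∂μ = ∫ ω, (X i : Ω → ℝ) ω ∂μ)
    -- Axiom RF
    (hRF : ∀ X (i : Fin n), ∀ᵐ ω ∂μ, ((A X i : Ω → ℝ) ω : EReal)
        ≤ essSup (fun ω' => ((X i : Ω → ℝ) ω' : EReal)) μ) :
    -- Property CP
    (∀ X (i : Fin n) (x : ℝ), (X i : Ω → ℝ) =ᵐ[μ] (fun _ => x) →
        (A X i : Ω → ℝ) =ᵐ[μ] fun _ => x) ∧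
    -- particular case: A^{(X,0,…,0)} = (X,0,…,0)
    (∀ X : Lp ℝ 1 μ,
      (A (Function.update (fun _ => 0) (⟨0, by omega⟩ : Fin n) X) ⟨0, by omega⟩ : Ω → ℝ)
        =ᵐ[μ] (X : Ω → ℝ) ∧
      ∀ j : Fin n, j ≠ ⟨0, by omega⟩ →
        (A (Function.update (fun _ => 0) (⟨0, by omega⟩ : Fin n) X) j : Ω → ℝ)
          =ᵐ[μ] (0 : Ω → ℝ)) := by
  classical
  have hμ : μ ≠ 0 := IsProbabilityMeasure.ne_zero μ
  have cp : ∀ X (i : Fin n) (x : ℝ), (X i : Ω → ℝ) =ᵐ[μ] (fun _ => x) →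
      (A X i : Ω → ℝ) =ᵐ[μ] fun _ => x := by
    intro X i x hx
    have hess : essSup (fun ω' => ((X i : Ω → ℝ) ω' : EReal)) μ = (x : EReal) := by
      have h1 : (fun ω' => ((X i : Ω → ℝ) ω' : EReal)) =ᵐ[μ] (fun _ => (x : EReal)) :=
        hx.mono fun ω hω => by simp [hω]
      rw [essSup_congr_ae h1, essSup_const _ hμ]
    have hle : ∀ᵐ ω ∂μ, (A X i : Ω → ℝ) ω ≤ x := by
      filter_upwards [hRF X i] with ω hω
      rw [hess] at hω
      exact_mod_cast hω
    have hInt : Integrable (A X i : Ω → ℝ) μ := L1.integrable_coeFn _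
    have hint : ∫ ω, (A X i : Ω → ℝ) ω ∂μ = x := by
      rw [hAF X i, integral_congr_ae hx]; simp
    have hzero : ∫ ω, (x - (A X i : Ω → ℝ) ω) ∂μ = 0 := by
      rw [integral_sub (integrable_const x) hInt, hint]; simp
    have hnn : 0 ≤ᵐ[μ] fun ω => x - (A X i : Ω → ℝ) ω :=
      hle.mono fun ω hω => by simpa using hω
    have hIc : Integrable (fun ω => x - (A X i : Ω → ℝ) ω) μ :=
      (integrable_const x).sub hInt
    have := (integral_eq_zero_iff_of_nonneg_ae hnn hIc).mp hzero
    filter_upwards [this] with ω hω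
    have : x - (A X i : Ω → ℝ) ω = 0 := hω
    linarith
  refine ⟨cp, fun X => ?_⟩
  set i0 : Fin n := ⟨0, by omega⟩
  set X' : Fin n → Lp ℝ 1 μ := Function.update (fun _ => 0) i0 X with hX'
  have hzeros : ∀ j : Fin n, j ≠ i0 → (A X' j : Ω → ℝ) =ᵐ[μ] (0 : Ω → ℝ) := by
    intro j hj
    have hXj : (X' j : Ω → ℝ) =ᵐ[μ] (fun _ => (0 : ℝ)) := by
      have : X' j = 0 := by simp [hX', Function.update_of_ne hj]
      rw [this]
      exact Lp.coeFn_zero _ _ _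
    exact cp X' j 0 hXj
  refine ⟨?_, hzeros⟩
  -- sum of X' is X
  have hXsum : (∑ i, X' i) = X := by
    simp [hX', Finset.sum_update_of_mem (Finset.mem_univ i0)]
  have hAsum : (∑ i, A X' i) = X := by rw [hsum, hXsum]
  have hsplit : A X' i0 + ∑ i ∈ Finset.univ.erase i0, A X' i = X := by
    rw [Finset.add_sum_erase _ _ (Finset.mem_univ i0), hAsum]
  have h1 := myLp_coeFn_sum Finset.univ (A X')
  rw [hAsum] at h1
  have h2 := myLp_coeFn_sum (Finset.univ.erase i0) (A X')
  have h3 : ∀ᵐ ω ∂μ, ∀ j : Fin n, j ∈ Finset.univ.erase i0 → (A X' j : Ω → ℝ) ω = 0 := by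
    rw [ae_all_iff]
    intro j
    by_cases hj : j = i0
    · simp [hj]
    · filter_upwards [hzeros j hj] with ω hω _
      exact hω
  filter_upwards [h1, h3] with ω h1ω h3ω
  have : (X : Ω → ℝ) ω = ∑ i, (A X' i : Ω → ℝ) ω := h1ω
  rw [← Finset.add_sum_erase _ _ (Finset.mem_univ i0)] at this
  rw [Finset.sum_congr rfl h3ω] at this
  simpa using this.symm
end
end

section
/- Let 𝒰 : L¹(Ω, 𝓕, ℙ) → ℝ be comonotonic-additive (𝒰(X + Y) = 𝒰(X) + 𝒰(Y) whenever (X, Y) is comonotonic) and superadditive (𝒰(X + Y) ≥ 𝒰(X) + 𝒰(Y) for all X, Y). If X = (X₁, …, Xₙ) ∈ (L¹)ⁿ is a comonotonic random vector and Y = (Y₁, …, Yₙ) ∈ (L¹)ⁿ satisfies Y₁ + ⋯ + Yₙ = X₁ + ⋯ + Xₙ a.s., then ∑_{i=1}^n 𝒰(−Xᵢ) ≥ ∑_{i=1}^n 𝒰(−Yᵢ). -/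
open MeasureTheory

noncomputable section

/-- A random vector (Z₁, …, Zₙ) is comonotonic if there exist nondecreasing functions
g₁, …, gₙ : ℝ → ℝ and a random variable W such that Zᵢ = gᵢ(W) a.s. for each i. -/
def Comonotonic {Ω : Type*} [MeasurableSpace Ω] (μ : MeasureTheory.Measure Ω)
    {n : ℕ} (Z : Fin n → Ω → ℝ) : Prop :=
  ∃ (g : Fin n → ℝ → ℝ) (W : Ω → ℝ),
    (∀ i, Monotone (g i)) ∧ (∀ i, Z i =ᵐ[μ] fun ω => g i (W ω))

/-- for a comonotonic-additive and superadditive functional 𝒰 on L¹, any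
comonotonic allocation X is Pareto dominant in total dual utility: for every allocation
Y of the same total risk, ∑ᵢ 𝒰(−Xᵢ) ≥ ∑ᵢ 𝒰(−Yᵢ). -/
theorem comonotonic_allocation_dual_utility_optimal
    {Ω : Type*} [MeasurableSpace Ω] {μ : Measure Ω} [IsProbabilityMeasure μ]
    {n : ℕ}
    (𝒰 : Lp ℝ 1 μ → ℝ)
    -- comonotonic additivity
    (hcomadd : ∀ X Y : Lp ℝ 1 μ, Comonotonic μ ![(X : Ω → ℝ), (Y : Ω → ℝ)] →
        𝒰 (X + Y) = 𝒰 X + 𝒰 Y)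
    -- superadditivity
    (hsuper : ∀ X Y : Lp ℝ 1 μ, 𝒰 X + 𝒰 Y ≤ 𝒰 (X + Y))
    (X Y : Fin n → Lp ℝ 1 μ)
    (hX : Comonotonic μ (fun i => (X i : Ω → ℝ)))
    (hYX : ∑ i, Y i = ∑ i, X i) :
    ∑ i, 𝒰 (-(Y i)) ≤ ∑ i, 𝒰 (-(X i)) := by
  classical
  -- 𝒰 0 = 0
  have h0 : 𝒰 (0 : Lp ℝ 1 μ) = 0 := by
    have hc : Comonotonic μ ![((0 : Lp ℝ 1 μ) : Ω → ℝ), ((0 : Lp ℝ 1 μ) : Ω → ℝ)] := by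
      refine ⟨fun _ _ => 0, fun _ => 0, fun i => monotone_const, fun i => ?_⟩
      fin_cases i <;>
        simpa [Pi.zero_def] using (Lp.coeFn_zero (E := ℝ) (p := 1) (μ := μ))
    have h2 := hcomadd 0 0 hc
    simp only [add_zero] at h2
    linarith
  -- superadditivity for finite sums
  have hsum_le : ∀ (s : Finset (Fin n)),
      ∑ i ∈ s, 𝒰 (-(Y i)) ≤ 𝒰 (∑ i ∈ s, -(Y i)) := by
    intro s
    induction s using Finset.induction with
    | empty => simp [h0]
    | insert _ _ hnotin ih =>
      rename_i a s
      rw [Finset.sum_insert hnotin, Finset.sum_insert hnotin]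
      calc 𝒰 (-(Y a)) + ∑ i ∈ s, 𝒰 (-(Y i))
          ≤ 𝒰 (-(Y a)) + 𝒰 (∑ i ∈ s, -(Y i)) := by linarith
        _ ≤ 𝒰 (-(Y a) + ∑ i ∈ s, -(Y i)) := hsuper _ _
  -- comonotone structure for the negated X's
  obtain ⟨g, W, hmono, hae⟩ := hX
  set W' : Ω → ℝ := fun ω => - W ω with hW'
  set h : Fin n → ℝ → ℝ := fun i t => - g i (-t) with hh
  have hmono' : ∀ i, Monotone (h i) := by
    intro i a b hab
    simp only [hh]
    exact neg_le_neg (hmono i (neg_le_neg hab))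
  have haeneg : ∀ i, ((-(X i) : Lp ℝ 1 μ) : Ω → ℝ) =ᵐ[μ] fun ω => h i (W' ω) := by
    intro i
    filter_upwards [Lp.coeFn_neg (X i), hae i] with ω h1 h2
    simp only [h1, Pi.neg_apply, hh, hW', neg_neg]
    rw [h2]
  -- comonotonic additivity over finite sums of negated X's
  have key : ∀ s : Finset (Fin n),
      ((((∑ i ∈ s, -(X i)) : Lp ℝ 1 μ) : Ω → ℝ) =ᵐ[μ] fun ω => ∑ i ∈ s, h i (W' ω)) ∧
      𝒰 (∑ i ∈ s, -(X i)) = ∑ i ∈ s, 𝒰 (-(X i)) := by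
    intro s
    induction s using Finset.induction with
    | empty =>
      constructor
      · simpa [Pi.zero_def] using (Lp.coeFn_zero (E := ℝ) (p := 1) (μ := μ))
      · simp [h0]
    | insert _ _ hnotin ih =>
      rename_i a s
      obtain ⟨ih1, ih2⟩ := ih
      have hc : Comonotonic μ ![((-(X a) : Lp ℝ 1 μ) : Ω → ℝ),
          (((∑ i ∈ s, -(X i)) : Lp ℝ 1 μ) : Ω → ℝ)] := by
        refine ⟨![h a, fun t => ∑ i ∈ s, h i t], W', ?_, ?_⟩
        · intro i
          fin_cases i
          · exact hmono' a
          · intro x y hxy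
            exact Finset.sum_le_sum fun i _ => hmono' i hxy
        · intro i
          fin_cases i
          · simpa using haeneg a
          · simpa using ih1
      have hadd := hcomadd _ _ hc
      constructor
      · rw [Finset.sum_insert hnotin]
        filter_upwards [Lp.coeFn_add (-(X a)) (∑ i ∈ s, -(X i)), haeneg a, ih1] with ω h1 h2 h3
        rw [h1, Finset.sum_insert hnotin]
        simp only [Pi.add_apply, h2, h3]
      · rw [Finset.sum_insert hnotin, Finset.sum_insert hnotin, hadd, ih2]
  -- put it together
  have hneg_eq : (∑ i, -(Y i)) = ∑ i, -(X i) := by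
    rw [Finset.sum_neg_distrib, Finset.sum_neg_distrib, hYX]
  calc ∑ i, 𝒰 (-(Y i)) ≤ 𝒰 (∑ i, -(Y i)) := hsum_le _
    _ = 𝒰 (∑ i, -(X i)) := by rw [hneg_eq]
    _ = ∑ i, 𝒰 (-(X i)) := (key Finset.univ).2
end
end

section
/- Let P be an integrable random variable with P > 0 a.s., let D₁, …, Dₙ ∈ 𝓕 be pairwise disjoint events with union D = D₁ ∪ ⋯ ∪ Dₙ satisfying ℙ(D) > 0, and suppose σ(1_{D₁}, …, 1_{Dₙ}) is independent of σ(P). Then for each i, E[P·1_{Dᵢ} | σ(P·1_D)] = (ℙ(Dᵢ)/ℙ(D)) · P·1_D almost surely. -/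
open MeasureTheory

noncomputable section

/-- in the mining pool model, for P > 0 integrable, pairwise disjoint
events D₁, …, Dₙ with union D of positive probability, with σ(1_{D₁}, …, 1_{Dₙ})
independent of σ(P), one has E[P·1_{Dᵢ} | σ(P·1_D)] = (ℙ(Dᵢ)/ℙ(D)) · P·1_D a.s. -/
theorem condexp_reward_proportional
    {Ω : Type*} [MeasurableSpace Ω] {μ : Measure Ω} [IsProbabilityMeasure μ]
    {n : ℕ}
    (P : Ω → ℝ) (hPm : Measurable P) (hPi : Integrable P μ)
    (hPpos : ∀ᵐ ω ∂μ, 0 < P ω)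
    (D : Fin n → Set Ω)
    (hDm : ∀ i, MeasurableSet (D i))
    (hdisj : Pairwise fun i j => Disjoint (D i) (D j))
    (hDpos : 0 < μ (⋃ k, D k))
    (hindep : ProbabilityTheory.Indep (MeasurableSpace.generateFrom (Set.range D))
        (MeasurableSpace.comap P inferInstance) μ)
    (i : Fin n) :
    μ[fun ω => P ω * (D i).indicator 1 ω |
        MeasurableSpace.comap (fun ω => P ω * (⋃ k, D k).indicator 1 ω) inferInstance]
      =ᵐ[μ]
    fun ω => ((μ (D i)).toReal / (μ (⋃ k, D k)).toReal)
        * (P ω * (⋃ k, D k).indicator 1 ω) := by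
  classical
  set Dall : Set Ω := ⋃ k, D k with hDall
  have hDallm : MeasurableSet Dall := MeasurableSet.iUnion hDm
  set Y : Ω → ℝ := fun ω => P ω * Dall.indicator 1 ω with hY
  have hYm : Measurable Y := hPm.mul (measurable_const.indicator hDallm)
  have hm : MeasurableSpace.comap Y Real.measurableSpace ≤ ‹MeasurableSpace Ω› :=
    hYm.comap_le
  set c : ℝ := (μ (D i)).toReal / (μ Dall).toReal with hc
  set f : Ω → ℝ := fun ω => P ω * (D i).indicator 1 ω with hf
  have hfi : Integrable f μ := by
    have : f = (D i).indicator P := by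
      funext ω
      by_cases h : ω ∈ D i <;> simp [hf, Set.indicator_of_mem, Set.indicator_of_notMem, h]
    rw [this]
    exact hPi.indicator (hDm i)
  have hYi : Integrable Y μ := by
    have : Y = Dall.indicator P := by
      funext ω
      by_cases h : ω ∈ Dall <;> simp [hY, Set.indicator_of_mem, Set.indicator_of_notMem, h]
    rw [this]
    exact hPi.indicator hDallm
  set g : Ω → ℝ := fun ω => c * Y ω with hg
  have hgi : Integrable g μ := hYi.const_mul c
  -- σ-algebras
  have hmono : ∀ {ma mb : MeasurableSpace Ω}, ma ≤ (MeasurableSpace.generateFrom (Set.range D)) → mb ≤ (MeasurableSpace.comap P Real.measurableSpace) →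
      ProbabilityTheory.Indep ma mb μ := by
    intro ma mb ha hb
    rw [ProbabilityTheory.Indep_iff] at hindep ⊢
    intro t1 t2 h1 h2
    exact hindep t1 t2 (ha _ h1) (hb _ h2)
  have hDi₁ : MeasurableSet[(MeasurableSpace.generateFrom (Set.range D))] (D i) :=
    MeasurableSpace.measurableSet_generateFrom ⟨i, rfl⟩
  have hDall₁ : MeasurableSet[(MeasurableSpace.generateFrom (Set.range D))] Dall :=
    MeasurableSet.iUnion fun k => MeasurableSpace.measurableSet_generateFrom ⟨k, rfl⟩
  have hP₂ : Measurable[(MeasurableSpace.comap P Real.measurableSpace)] P := fun s hs => ⟨s, hs, rfl⟩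
  -- uniqueness of condexp
  refine (ae_eq_condExp_of_forall_setIntegral_eq hm hfi
    (fun s _ _ => hgi.integrableOn) (fun s hs _ => ?_) ?_).symm
  · -- the set-integral identity
    obtain ⟨B, hB, rfl⟩ := hs
    set Z : Ω → ℝ := fun ω => P ω * B.indicator 1 (P ω) with hZdef
    have hZ₂ : Measurable[(MeasurableSpace.comap P Real.measurableSpace)] Z := by
      have hgZ : Measurable fun x : ℝ => x * B.indicator 1 x :=
        measurable_id.mul (measurable_const.indicator hB)
      exact hgZ.comp hP₂
    have hZm : Measurable Z := hZ₂.mono (hPm.comap_le) le_rfl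
    have key : ∀ (A : Set Ω), MeasurableSet A → MeasurableSet[(MeasurableSpace.generateFrom (Set.range D))] A →
        ∫ x, A.indicator (1 : Ω → ℝ) x * Z x ∂μ = (μ A).toReal * ∫ x, Z x ∂μ := by
      intro A hA hA₁
      have hXA : Measurable[(MeasurableSpace.generateFrom (Set.range D))] (A.indicator (1 : Ω → ℝ)) :=
        measurable_const.indicator hA₁
      have hindepF : ProbabilityTheory.IndepFun (A.indicator (1 : Ω → ℝ)) Z μ :=
        (ProbabilityTheory.IndepFun_iff_Indep _ _ _).mpr
          (hmono hXA.comap_le hZ₂.comap_le)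
      have h1 : ∫ x, A.indicator (1 : Ω → ℝ) x ∂μ = (μ A).toReal := by
        have : A.indicator (1 : Ω → ℝ) = A.indicator (fun _ => (1:ℝ)) := rfl
        rw [this, integral_indicator_const (1 : ℝ) hA]; simp [Measure.real]
      have := ProbabilityTheory.IndepFun.integral_mul_eq_mul_integral hindepF
        ((measurable_const.indicator hA).aestronglyMeasurable)
        hZm.aestronglyMeasurable
      simpa [Pi.mul_apply, h1] using this
    have hs0 : MeasurableSet (Y ⁻¹' B) := hYm hB
    -- left side : ∫ over s of g
    have hptY : (Y ⁻¹' B).indicator Y = fun ω => Dall.indicator (1 : Ω → ℝ) ω * Z ω := by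
      funext ω
      by_cases hω : ω ∈ Dall
      · have hYω : Y ω = P ω := by simp [hY, Set.indicator_of_mem hω]
        by_cases hB' : P ω ∈ B
        · rw [Set.indicator_of_mem (by simpa [Set.mem_preimage, hYω] using hB')]
          simp [hZdef, hYω, Set.indicator_of_mem hω, Set.indicator_of_mem hB']
        · rw [Set.indicator_of_notMem (by simpa [Set.mem_preimage, hYω] using hB')]
          simp [hZdef, Set.indicator_of_notMem hB']
      · have hYω : Y ω = 0 := by simp [hY, Set.indicator_of_notMem hω]
        by_cases hmem : ω ∈ Y ⁻¹' B
        · rw [Set.indicator_of_mem hmem, hYω]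
          simp [Set.indicator_of_notMem hω]
        · rw [Set.indicator_of_notMem hmem]
          simp [Set.indicator_of_notMem hω]
    have hptf : (Y ⁻¹' B).indicator f = fun ω => (D i).indicator (1 : Ω → ℝ) ω * Z ω := by
      funext ω
      by_cases hω : ω ∈ D i
      · have hωD : ω ∈ Dall := Set.mem_iUnion.mpr ⟨i, hω⟩
        have hYω : Y ω = P ω := by simp [hY, Set.indicator_of_mem hωD]
        have hfω : f ω = P ω := by simp [hf, Set.indicator_of_mem hω]
        by_cases hB' : P ω ∈ B
        · rw [Set.indicator_of_mem (by simpa [Set.mem_preimage, hYω] using hB')]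
          simp [hZdef, hfω, Set.indicator_of_mem hω, Set.indicator_of_mem hB']
        · rw [Set.indicator_of_notMem (by simpa [Set.mem_preimage, hYω] using hB')]
          simp [hZdef, Set.indicator_of_notMem hB']
      · have hfω : f ω = 0 := by simp [hf, Set.indicator_of_notMem hω]
        by_cases hmem : ω ∈ Y ⁻¹' B
        · rw [Set.indicator_of_mem hmem, hfω]
          simp [Set.indicator_of_notMem hω]
        · rw [Set.indicator_of_notMem hmem]
          simp [Set.indicator_of_notMem hω]
    have hIf : ∫ x in Y ⁻¹' B, f x ∂μ = (μ (D i)).toReal * ∫ x, Z x ∂μ := by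
      rw [← integral_indicator hs0, hptf]
      exact key (D i) (hDm i) hDi₁
    have hIY : ∫ x in Y ⁻¹' B, Y x ∂μ = (μ Dall).toReal * ∫ x, Z x ∂μ := by
      rw [← integral_indicator hs0, hptY]
      exact key Dall hDallm hDall₁
    have hD0 : (μ Dall).toReal ≠ 0 := by
      have h1 : μ Dall ≠ 0 := ne_of_gt hDpos
      have h2 : μ Dall ≠ ⊤ := measure_ne_top μ _
      simp [ENNReal.toReal_eq_zero_iff, h1, h2]
    calc ∫ x in Y ⁻¹' B, g x ∂μ = c * ∫ x in Y ⁻¹' B, Y x ∂μ := by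
          simp only [hg]; rw [integral_const_mul]
      _ = c * ((μ Dall).toReal * ∫ x, Z x ∂μ) := by rw [hIY]
      _ = (μ (D i)).toReal * ∫ x, Z x ∂μ := by
          rw [hc, ← mul_assoc, div_mul_cancel₀ _ hD0]
      _ = ∫ x in Y ⁻¹' B, f x ∂μ := hIf.symm
  · -- measurability of g w.r.t. m
    have hYm' : Measurable[MeasurableSpace.comap Y Real.measurableSpace] Y := fun s hs => ⟨s, hs, rfl⟩
    exact StronglyMeasurable.aestronglyMeasurable ((hYm'.const_mul c).stronglyMeasurable)
end
end
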